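/- arXiv:1706.05532 — 2 statements merged into one kernel-verified Lean document; each statement's English description precedes it below -/
import Mathlib

section
/- A Hermitian operator W on the total Hilbert space of parties A, B, C, ... (each party X having an input system x₁ and an output system x₂) that is positive semidefinite and has trace equal to d_O (the product of the output dimensions) yields normalized outcome probabilities — i.e., Tr[W (M^A ⊗ M^B ⊗ ⋯)] = 1 for every choice of Choi matrices M^X of completely positive trace-preserving maps from x₁ to x₂ (i.e., M^X positive semidefinite with partial trace over x₂ equal to the identity on x₁) — if and only if, in its Hilbert–Schmidt expansion, every nonzero nontrivial term is of type a₁ on some party A, i.e., there is a party on which the term acts nontrivially on the input system and trivially (as identity) on the output system. -/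
open Matrix Kronecker BigOperators
open scoped ComplexOrder

namespace ProcessPaper

/-- A (generalized) Hilbert–Schmidt basis of operators on a finite-dimensional Hilbert
space with orthonormal basis indexed by `n`: a family of Hermitian matrices indexed by
`ι` (with `Fintype.card ι = (Fintype.card n) ^ 2`), whose distinguished element `σ 0`
is the identity, whose other elements are traceless, which are mutually orthogonal
under the trace inner product, and which are all nonzero. -/
def IsHSBasis {n : Type*} [Fintype n] [DecidableEq n] {ι : Type*} [Fintype ι] [Zero ι]
    (σ : ι → Matrix n n ℂ) : Prop :=
  Fintype.card ι = (Fintype.card n) ^ 2 ∧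
  (∀ i, (σ i).IsHermitian) ∧
  σ 0 = 1 ∧
  (∀ i, i ≠ 0 → (σ i).trace = 0) ∧
  (∀ i j, i ≠ j → (σ i * σ j).trace = 0) ∧
  (∀ i, σ i ≠ 0)


section Helpers

set_option linter.unusedSectionVars false

theorem trace_mul_self_ne_zero {n : Type*} [Fintype n] (H : Matrix n n ℂ)
    (hH : H.IsHermitian) (h0 : H ≠ 0) : (H * H).trace ≠ 0 := by
  have hsym : ∀ i j, H i j = (starRingEnd ℂ) (H j i) := by
    intro i j
    conv_lhs => rw [← hH]
    rfl
  have htr : (H * H).trace = ((∑ i, ∑ j, Complex.normSq (H j i) : ℝ) : ℂ) := by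
    rw [Matrix.trace]
    push_cast
    refine Finset.sum_congr rfl fun i _ => ?_
    rw [Matrix.diag_apply, Matrix.mul_apply]
    refine Finset.sum_congr rfl fun j _ => ?_
    rw [hsym i j, mul_comm, Complex.mul_conj]
  rw [htr]
  norm_cast
  intro hc
  apply h0
  ext i j
  have h1 : ∀ a ∈ Finset.univ, (0:ℝ) ≤ ∑ b, Complex.normSq (H b a) :=
    fun a _ => Finset.sum_nonneg fun b _ => Complex.normSq_nonneg _
  have h2 := (Finset.sum_eq_zero_iff_of_nonneg h1).mp hc j (Finset.mem_univ _)
  have h3 := (Finset.sum_eq_zero_iff_of_nonneg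
    (fun b _ => Complex.normSq_nonneg (H b j))).mp h2 i (Finset.mem_univ _)
  simpa using (Complex.normSq_eq_zero.mp h3)

/-- `1 + δ • H` is PSD for Hermitian `H` and small real `δ`. -/
theorem posSemidef_one_add_smul {n : Type*} [Fintype n] [DecidableEq n]
    (H : Matrix n n ℂ) (hH : H.IsHermitian) (δ : ℝ)
    (hδ : |δ| * (∑ i, ∑ j, ‖H i j‖) ≤ 1) :
    ((1 : Matrix n n ℂ) + (δ : ℂ) • H).PosSemidef := by
  have hCnn : 0 ≤ ∑ i, ∑ j, ‖H i j‖ := Finset.sum_nonneg fun _ _ =>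
    Finset.sum_nonneg fun _ _ => norm_nonneg _
  rw [Matrix.posSemidef_iff_dotProduct_mulVec]
  constructor
  · unfold Matrix.IsHermitian
    rw [Matrix.conjTranspose_add, Matrix.conjTranspose_smul, Matrix.conjTranspose_one, hH]
    norm_num
  intro x
  set S : ℝ := ∑ i, Complex.normSq (x i) with hS
  have hSnn : 0 ≤ S := Finset.sum_nonneg fun _ _ => Complex.normSq_nonneg _
  set q : ℂ := star x ⬝ᵥ (H *ᵥ x) with hq
  have hqs : q = ∑ i, ∑ j, (starRingEnd ℂ) (x i) * H i j * x j := by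
    simp [hq, dotProduct, Matrix.mulVec, Finset.mul_sum, mul_assoc]
  have hc : ∀ i j, (starRingEnd ℂ) (H i j) = H j i := by
    intro i j
    have := congrFun (congrFun hH j) i
    rw [Matrix.conjTranspose_apply] at this
    exact this
  have hqr : (starRingEnd ℂ) q = q := by
    rw [hqs, map_sum]
    rw [Finset.sum_comm]
    refine Finset.sum_congr rfl fun i _ => ?_
    rw [map_sum]
    refine Finset.sum_congr rfl fun j _ => ?_
    simp only [_root_.map_mul, RingHom.id_apply, Complex.conj_conj]
    rw [hc]
    ring
  have hqb : ‖q‖ ≤ (∑ i, ∑ j, ‖H i j‖) * S := by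
    rw [hqs]
    calc ‖∑ i, ∑ j, (starRingEnd ℂ) (x i) * H i j * x j‖
        ≤ ∑ i, ‖∑ j, (starRingEnd ℂ) (x i) * H i j * x j‖ :=
          norm_sum_le _ _
      _ ≤ ∑ i, ∑ j, ‖(starRingEnd ℂ) (x i) * H i j * x j‖ :=
          Finset.sum_le_sum fun i _ => norm_sum_le _ _
      _ ≤ ∑ i, ∑ j, ‖H i j‖ * S := by
          refine Finset.sum_le_sum fun i _ => Finset.sum_le_sum fun j _ => ?_
          rw [norm_mul, norm_mul, Complex.norm_conj]
          have hi : ‖x i‖ ^ 2 ≤ S := by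
            rw [Complex.sq_norm]
            exact Finset.single_le_sum (fun k _ => Complex.normSq_nonneg (x k))
              (Finset.mem_univ i)
          have hj : ‖x j‖ ^ 2 ≤ S := by
            rw [Complex.sq_norm]
            exact Finset.single_le_sum (fun k _ => Complex.normSq_nonneg (x k))
              (Finset.mem_univ j)
          have hij : ‖x i‖ * ‖x j‖ ≤ S := by
            nlinarith [norm_nonneg (x i), norm_nonneg (x j),
              sq_nonneg (‖x i‖ - ‖x j‖)]
          calc ‖x i‖ * ‖H i j‖ * ‖x j‖
              = ‖H i j‖ * (‖x i‖ * ‖x j‖) := by ring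
            _ ≤ ‖H i j‖ * S :=
                mul_le_mul_of_nonneg_left hij (norm_nonneg _)
      _ = (∑ i, ∑ j, ‖H i j‖) * S := by
          rw [Finset.sum_mul]
          exact Finset.sum_congr rfl fun i _ => (Finset.sum_mul _ _ _).symm
  have h2 : q = (q.re : ℂ) := (Complex.conj_eq_iff_re.mp hqr).symm
  have h1 : star x ⬝ᵥ x = (S : ℂ) := by
    rw [dotProduct, hS]
    push_cast
    refine Finset.sum_congr rfl fun i _ => ?_
    simp only [Pi.star_apply, Complex.star_def]
    rw [mul_comm, Complex.mul_conj]
  have hform : star x ⬝ᵥ (((1 : Matrix n n ℂ) + (δ : ℂ) • H) *ᵥ x)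
      = ((S + δ * q.re : ℝ) : ℂ) := by
    rw [Matrix.add_mulVec, dotProduct_add, Matrix.one_mulVec, Matrix.smul_mulVec,
      dotProduct_smul, smul_eq_mul, ← hq, h1]
    conv_lhs => rw [h2]
    push_cast
    ring
  rw [hform, Complex.zero_le_real]
  have hre : |q.re| ≤ (∑ i, ∑ j, ‖H i j‖) * S :=
    le_trans (Complex.abs_re_le_norm q) hqb
  have habs : |δ * q.re| ≤ S := by
    rw [abs_mul]
    calc |δ| * |q.re| ≤ |δ| * ((∑ i, ∑ j, ‖H i j‖) * S) :=
        mul_le_mul_of_nonneg_left hre (abs_nonneg δ)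
      _ = (|δ| * (∑ i, ∑ j, ‖H i j‖)) * S := by ring
      _ ≤ 1 * S := mul_le_mul_of_nonneg_right hδ hSnn
      _ = S := one_mul S
  have := abs_le.mp habs
  linarith [this.1]

theorem posSemidef_ofReal_smul {n : Type*} [Fintype n] (r : ℝ) (hr : 0 ≤ r)
    {N : Matrix n n ℂ} (hN : N.PosSemidef) : ((r : ℂ) • N).PosSemidef := by
  rw [Matrix.posSemidef_iff_dotProduct_mulVec]
  constructor
  · unfold Matrix.IsHermitian
    rw [Matrix.conjTranspose_smul, hN.1.eq]
    norm_num
  intro x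
  rw [Matrix.smul_mulVec, dotProduct_smul, smul_eq_mul]
  exact mul_nonneg (by exact_mod_cast hr) ((Matrix.posSemidef_iff_dotProduct_mulVec.mp hN).2 x)

theorem isHermitian_kronecker {n m : Type*} (A : Matrix n n ℂ) (B : Matrix m m ℂ)
    (hA : A.IsHermitian) (hB : B.IsHermitian) : (A ⊗ₖ B).IsHermitian := by
  ext x y
  rw [Matrix.conjTranspose_apply, Matrix.kroneckerMap_apply, Matrix.kroneckerMap_apply]
  rw [star_mul']
  rw [show (star (B y.2 x.2) : ℂ) = Bᴴ x.2 y.2 from rfl,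
    show (star (A y.1 x.1) : ℂ) = Aᴴ x.1 y.1 from rfl, hA.eq, hB.eq]

theorem sum_out_kronecker {n m : Type*} [Fintype m] (A : Matrix n n ℂ) (B : Matrix m m ℂ)
    (i j : n) : (∑ o : m, (A ⊗ₖ B) (i, o) (j, o)) = A i j * B.trace := by
  simp [Matrix.kroneckerMap_apply, Matrix.trace, Finset.mul_sum]

theorem sum_out_one {n m : Type*} [Fintype m] [DecidableEq n] [DecidableEq m] (i j : n) :
    (∑ o : m, (1 : Matrix (n × m) (n × m) ℂ) (i, o) (j, o))
      = (Fintype.card m : ℂ) * (1 : Matrix n n ℂ) i j := by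
  rw [← Matrix.one_kronecker_one (α := ℂ) (m := n) (n := m), sum_out_kronecker,
    Matrix.trace_one, mul_comm]

theorem trace_kron_one_mul {n m : Type*} [Fintype n] [DecidableEq n] [Fintype m]
    [DecidableEq m] (A : Matrix n n ℂ) (M : Matrix (n × m) (n × m) ℂ)
    (hM : ∀ i j, (∑ o : m, M (i, o) (j, o)) = (1 : Matrix n n ℂ) i j) :
    ((A ⊗ₖ (1 : Matrix m m ℂ)) * M).trace = A.trace := by
  have key : ((A ⊗ₖ (1 : Matrix m m ℂ)) * M).trace
      = ∑ a : n, ∑ b : n, A a b * ∑ o : m, M (b, o) (a, o) := by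
    rw [Matrix.trace]
    simp only [Matrix.diag_apply, Matrix.mul_apply, Matrix.kroneckerMap_apply,
      Fintype.sum_prod_type, Matrix.one_apply, mul_ite, mul_one, mul_zero, ite_mul, zero_mul,
      Finset.sum_ite_eq, Finset.mem_univ, if_true, Finset.mul_sum]
    exact Finset.sum_congr rfl fun a _ => Finset.sum_comm
  rw [key]
  simp only [hM]
  rw [Matrix.trace]
  refine Finset.sum_congr rfl fun a _ => ?_
  simp [Matrix.one_apply, mul_ite, Finset.sum_ite_eq']

theorem trace_choi {n m : Type*} [Fintype n] [DecidableEq n] [Fintype m]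
    (M : Matrix (n × m) (n × m) ℂ)
    (hM : ∀ i j, (∑ o : m, M (i, o) (j, o)) = (1 : Matrix n n ℂ) i j) :
    M.trace = (Fintype.card n : ℂ) := by
  rw [Matrix.trace]
  rw [Fintype.sum_prod_type]
  simp only [Matrix.diag_apply]
  simp [hM, Matrix.one_apply]

end Helpers

variable {P : Type*} [Fintype P] [DecidableEq P]

section defs

variable {I O : P → Type*} [∀ p, Fintype (I p)] [∀ p, DecidableEq (I p)]
  [∀ p, Fintype (O p)] [∀ p, DecidableEq (O p)]
  {ιI ιO : P → Type*} [∀ p, Fintype (ιI p)] [∀ p, Zero (ιI p)]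
  [∀ p, Fintype (ιO p)] [∀ p, Zero (ιO p)]

/-- The tensor product, over all parties, of party-local operators
(each party `p` carries the Hilbert space of its input system `I p`
tensored with its output system `O p`). -/
def tensorFamily (M : ∀ p, Matrix (I p × O p) (I p × O p) ℂ) :
    Matrix ((p : P) → I p × O p) ((p : P) → I p × O p) ℂ :=
  fun x y => ∏ p, M p (x p) (y p)

/-- The Hilbert–Schmidt basis term with multi-index `t`:
`⨂_p σI p (t p).1 ⊗ σO p (t p).2`. -/
def hsTerm (σI : ∀ p, ιI p → Matrix (I p) (I p) ℂ)
    (σO : ∀ p, ιO p → Matrix (O p) (O p) ℂ)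
    (t : ∀ p, ιI p × ιO p) :
    Matrix ((p : P) → I p × O p) ((p : P) → I p × O p) ℂ :=
  fun x y => ∏ p, σI p (t p).1 (x p).1 (y p).1 * σO p (t p).2 (x p).2 (y p).2

/-- The operator with Hilbert–Schmidt coefficients `w`. -/
noncomputable def expand (σI : ∀ p, ιI p → Matrix (I p) (I p) ℂ)
    (σO : ∀ p, ιO p → Matrix (O p) (O p) ℂ)
    (w : (∀ p, ιI p × ιO p) → ℝ) :
    Matrix ((p : P) → I p × O p) ((p : P) → I p × O p) ℂ :=
  ∑ t : ∀ p, ιI p × ιO p, (w t : ℂ) • hsTerm σI σO t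


set_option linter.unusedSectionVars false

theorem tensorFamily_one :
    tensorFamily (fun p => (1 : Matrix (I p × O p) (I p × O p) ℂ)) = 1 := by
  ext x y
  by_cases h : x = y
  · subst h
    simp [tensorFamily, Matrix.one_apply]
  · rw [tensorFamily, Matrix.one_apply_ne h]
    obtain ⟨p, hp⟩ : ∃ p, x p ≠ y p := by
      by_contra hc
      push_neg at hc
      exact h (funext hc)
    exact Finset.prod_eq_zero (Finset.mem_univ p) (Matrix.one_apply_ne hp)

private def pairPiEquiv {A : P → Type*} : ((∀ p, A p) × (∀ p, A p)) ≃ (∀ p, A p × A p) where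
  toFun xy p := (xy.1 p, xy.2 p)
  invFun z := (fun p => (z p).1, fun p => (z p).2)
  left_inv _ := rfl
  right_inv _ := rfl

theorem trace_hsTerm_mul (σI : ∀ p, ιI p → Matrix (I p) (I p) ℂ)
    (σO : ∀ p, ιO p → Matrix (O p) (O p) ℂ)
    (t : ∀ p, ιI p × ιO p) (M : ∀ p, Matrix (I p × O p) (I p × O p) ℂ) :
    (hsTerm σI σO t * tensorFamily M).trace
      = ∏ p, ((σI p (t p).1 ⊗ₖ σO p (t p).2) * M p).trace := by
  classical
  have rhs : ∀ p, ((σI p (t p).1 ⊗ₖ σO p (t p).2) * M p).trace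
      = ∑ z : (I p × O p) × (I p × O p),
          σI p (t p).1 (z.1).1 (z.2).1 * σO p (t p).2 (z.1).2 (z.2).2 * M p z.2 z.1 := by
    intro p
    rw [Matrix.trace]
    simp only [Matrix.diag_apply, Matrix.mul_apply, Matrix.kroneckerMap_apply]
    exact (Fintype.sum_prod_type (fun z : (I p × O p) × (I p × O p) =>
      σI p (t p).1 z.1.1 z.2.1 * σO p (t p).2 z.1.2 z.2.2 * M p z.2 z.1)).symm
  have lhs : (hsTerm σI σO t * tensorFamily M).trace
      = ∑ z : ∀ p, (I p × O p) × (I p × O p),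
          ∏ p, (σI p (t p).1 ((z p).1).1 ((z p).2).1 * σO p (t p).2 ((z p).1).2 ((z p).2).2
            * M p (z p).2 (z p).1) := by
    rw [Matrix.trace]
    simp only [Matrix.diag_apply, Matrix.mul_apply, hsTerm, tensorFamily,
      ← Finset.prod_mul_distrib]
    rw [(Fintype.sum_prod_type (fun xy : (∀ p, I p × O p) × (∀ p, I p × O p) =>
      ∏ p, (σI p (t p).1 (xy.1 p).1 (xy.2 p).1 * σO p (t p).2 (xy.1 p).2 (xy.2 p).2
        * M p (xy.2 p) (xy.1 p)))).symm]
    exact Fintype.sum_equiv pairPiEquiv _ _ (fun xy => rfl)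
  rw [lhs]
  simp only [rhs]
  rw [Finset.prod_univ_sum, Fintype.piFinset_univ]

end defs

section types

variable {ιI ιO : P → Type*} [∀ p, Zero (ιI p)] [∀ p, Zero (ιO p)]

/-- A term is trivial on party `p` if its indices on both the input and the output
system of `p` are zero (identity factor on party `p`). -/
def TrivialAt (t : ∀ p, ιI p × ιO p) (p : P) : Prop :=
  (t p).1 = 0 ∧ (t p).2 = 0

/-- A term is in type on party `p` if it is nontrivial on the input system of `p`
and trivial (identity) on the output system of `p`. -/
def InTypeAt (t : ∀ p, ιI p × ιO p) (p : P) : Prop :=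
  (t p).1 ≠ 0 ∧ (t p).2 = 0

/-- A term includes the out type on party `p` if it is nontrivial on the output
system of `p`. -/
def IncludesOutAt (t : ∀ p, ιI p × ιO p) (p : P) : Prop :=
  (t p).2 ≠ 0

/-- A term is nontrivial if it is nontrivial on some party
(i.e. it is not the identity term). -/
def NontrivialTerm (t : ∀ p, ιI p × ιO p) : Prop :=
  ∃ p, ¬ TrivialAt t p

/-- The Oreshkov–Giarmatzi condition on Hilbert–Schmidt coefficients: every nonzero
nontrivial term is in type on at least one party. -/
def OGCoeffs (w : (∀ p, ιI p × ιO p) → ℝ) : Prop :=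
  ∀ t, w t ≠ 0 → NontrivialTerm t → ∃ p, InTypeAt t p

end types

section process

variable {I O : P → Type*} [∀ p, Fintype (I p)] [∀ p, DecidableEq (I p)]
  [∀ p, Fintype (O p)] [∀ p, DecidableEq (O p)]
  {ιI ιO : P → Type*} [∀ p, Fintype (ιI p)] [∀ p, Zero (ιI p)]
  [∀ p, Fintype (ιO p)] [∀ p, Zero (ιO p)]

/-- `W` is a valid process with Hilbert–Schmidt coefficients `w` (relative to the
Hilbert–Schmidt bases `σI`, `σO`): it is positive semidefinite, has trace equal to the
product `d_O` of the output dimensions, has expansion given by `w`, and every nonzero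
nontrivial Hilbert–Schmidt term of it is in type on at least one party. -/
def IsProcessWith (σI : ∀ p, ιI p → Matrix (I p) (I p) ℂ)
    (σO : ∀ p, ιO p → Matrix (O p) (O p) ℂ)
    (W : Matrix ((p : P) → I p × O p) ((p : P) → I p × O p) ℂ)
    (w : (∀ p, ιI p × ιO p) → ℝ) : Prop :=
  W.PosSemidef ∧
  W.trace = ∏ p, (Fintype.card (O p) : ℂ) ∧
  W = expand σI σO w ∧
  OGCoeffs w

/-- `W` is a valid process (relative to the Hilbert–Schmidt bases `σI`, `σO`). -/
def IsProcess (σI : ∀ p, ιI p → Matrix (I p) (I p) ℂ)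
    (σO : ∀ p, ιO p → Matrix (O p) (O p) ℂ)
    (W : Matrix ((p : P) → I p × O p) ((p : P) → I p × O p) ℂ) : Prop :=
  ∃ w, IsProcessWith σI σO W w

end process

section product

variable {I' O' I'' O'' : P → Type*}

/-- The tensor product `P = W ⊗ Z` of an operator `W` for parties `A', B', …` and an
operator `Z` for parties `A'', B'', …`, regarded as an operator for the combined
parties `A = A'A''` (input `a₁ = a₁'a₁''`, output `a₂ = a₂'a₂''`), `B = B'B''`, …. -/
def prodOp (W : Matrix ((p : P) → I' p × O' p) ((p : P) → I' p × O' p) ℂ)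
    (Z : Matrix ((p : P) → I'' p × O'' p) ((p : P) → I'' p × O'' p) ℂ) :
    Matrix ((p : P) → (I' p × I'' p) × (O' p × O'' p))
      ((p : P) → (I' p × I'' p) × (O' p × O'' p)) ℂ :=
  fun x y =>
    W (fun p => ((x p).1.1, (x p).2.1)) (fun p => ((y p).1.1, (y p).2.1)) *
    Z (fun p => ((x p).1.2, (x p).2.2)) (fun p => ((y p).1.2, (y p).2.2))

end product

/-- The Hilbert–Schmidt basis of a combined system, consisting of the tensor (Kronecker)
products of the basis elements of the two subsystems; its distinguished (identity)
element is the product of the two distinguished elements. -/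
def prodBasis {n n' ι ι' : Type*} (σ : ι → Matrix n n ℂ) (σ' : ι' → Matrix n' n' ℂ) :
    ι × ι' → Matrix (n × n') (n × n') ℂ :=
  fun i => σ i.1 ⊗ₖ σ' i.2

section coeffs

variable {ιI' ιO' ιI'' ιO'' : P → Type*}

/-- The Hilbert–Schmidt coefficients of a tensor product `W ⊗ Z` in terms of the
coefficients `w` of `W` and `z` of `Z`. -/
def prodCoeffs (w : (∀ p, ιI' p × ιO' p) → ℝ) (z : (∀ p, ιI'' p × ιO'' p) → ℝ) :
    (∀ p, (ιI' p × ιI'' p) × (ιO' p × ιO'' p)) → ℝ :=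
  fun u => w (fun p => ((u p).1.1, (u p).2.1)) * z (fun p => ((u p).1.2, (u p).2.2))

/-- The multi-index of the tensor product of the term `t` of `W` and the term `s`
of `Z`, as a term for the combined parties. -/
def combineTerm (t : ∀ p, ιI' p × ιO' p) (s : ∀ p, ιI'' p × ιO'' p) :
    ∀ p, (ιI' p × ιI'' p) × (ιO' p × ιO'' p) :=
  fun p => (((t p).1, (s p).1), ((t p).2, (s p).2))

end coeffs

section twoparty

variable {ιI ιO : Fin 2 → Type*} [∀ p, Zero (ιI p)] [∀ p, Zero (ιO p)]

/-- For two parties `A` (party `0`) and `B` (party `1`), an `A` to `B` signalling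
term: a term of type `a₂b₁` or `a₁a₂b₁`, i.e. nontrivial on `a₂` and on `b₁` and
trivial on `b₂`. -/
def AtoBSig (t : ∀ p, ιI p × ιO p) : Prop :=
  (t 0).2 ≠ 0 ∧ (t 1).1 ≠ 0 ∧ (t 1).2 = 0

/-- A `B` to `A` signalling term: a term of type `a₁b₂` or `a₁b₁b₂`, i.e. nontrivial
on `b₂` and on `a₁` and trivial on `a₂`. -/
def BtoASig (t : ∀ p, ιI p × ιO p) : Prop :=
  (t 1).2 ≠ 0 ∧ (t 0).1 ≠ 0 ∧ (t 0).2 = 0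

end twoparty


section Statement0

variable {P : Type*} [Fintype P] [DecidableEq P]
  {I O : P → Type*} [∀ p, Fintype (I p)] [∀ p, DecidableEq (I p)]
  [∀ p, Fintype (O p)] [∀ p, DecidableEq (O p)]
  {ιI ιO : P → Type*} [∀ p, Fintype (ιI p)] [∀ p, Zero (ιI p)]
  [∀ p, Fintype (ιO p)] [∀ p, Zero (ιO p)]

/-- `M` is the Choi matrix of a completely positive trace-preserving map from the
input system `n` to the output system `m`: it is positive semidefinite and its
partial trace over the output system is the identity on the input system. -/
def IsCPTPChoi {n m : Type*} [Fintype n] [DecidableEq n] [Fintype m]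
    (M : Matrix (n × m) (n × m) ℂ) : Prop :=
  M.PosSemidef ∧ ∀ i j, (∑ o : m, M (i, o) (j, o)) = (1 : Matrix n n ℂ) i j

/-- **Proposition 1 (Oreshkov–Giarmatzi).** A Hermitian operator `W` on the total
Hilbert space of the parties (given by its Hilbert–Schmidt expansion with real
coefficients `w`) that is positive semidefinite and has trace `d_O` (the product of
the output dimensions) yields normalized outcome probabilities—i.e.
`Tr[W (M^A ⊗ M^B ⊗ ⋯)] = 1` for every choice of Choi matrices `M^X` of CPTP maps
from the input to the output of each party—if and only if every nonzero nontrivial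
term of its Hilbert–Schmidt expansion is of type `a₁` on some party `A`, that is,
in type (nontrivial on the input system and identity on the output system) on at
least one party. -/
theorem statement0
    (σI : ∀ p, ιI p → Matrix (I p) (I p) ℂ) (σO : ∀ p, ιO p → Matrix (O p) (O p) ℂ)
    (hσI : ∀ p, IsHSBasis (σI p)) (hσO : ∀ p, IsHSBasis (σO p))
    (W : Matrix ((p : P) → I p × O p) ((p : P) → I p × O p) ℂ)
    (w : (∀ p, ιI p × ιO p) → ℝ)
    (hexp : W = expand σI σO w)
    (hpsd : W.PosSemidef)
    (htr : W.trace = ∏ p, (Fintype.card (O p) : ℂ)) :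
    (∀ M : ∀ p, Matrix (I p × O p) (I p × O p) ℂ,
        (∀ p, IsCPTPChoi (M p)) → (W * tensorFamily M).trace = 1)
      ↔ OGCoeffs w := by
  classical
  have hIher : ∀ p i, (σI p i).IsHermitian := fun p => (hσI p).2.1
  have hOher : ∀ p i, (σO p i).IsHermitian := fun p => (hσO p).2.1
  have hI0 : ∀ p, σI p 0 = 1 := fun p => (hσI p).2.2.1
  have hO0 : ∀ p, σO p 0 = 1 := fun p => (hσO p).2.2.1
  have hItr : ∀ p (i : ιI p), i ≠ 0 → (σI p i).trace = 0 := fun p => (hσI p).2.2.2.1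
  have hOtr : ∀ p (i : ιO p), i ≠ 0 → (σO p i).trace = 0 := fun p => (hσO p).2.2.2.1
  have hIorth : ∀ p (i j : ιI p), i ≠ j → (σI p i * σI p j).trace = 0 :=
    fun p => (hσI p).2.2.2.2.1
  have hOorth : ∀ p (i j : ιO p), i ≠ j → (σO p i * σO p j).trace = 0 :=
    fun p => (hσO p).2.2.2.2.1
  have hInz : ∀ p (i : ιI p), σI p i ≠ 0 := fun p => (hσI p).2.2.2.2.2
  have hOnz : ∀ p (i : ιO p), σO p i ≠ 0 := fun p => (hσO p).2.2.2.2.2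
  -- positivity of dimensions
  have hOcard : ∀ p, 0 < Fintype.card (O p) := by
    intro p
    have h1 : 0 < Fintype.card (ιO p) := Fintype.card_pos_iff.mpr ⟨0⟩
    rw [(hσO p).1] at h1
    exact Nat.pos_of_ne_zero fun h => by simp [h] at h1
  have hIcard : ∀ p, 0 < Fintype.card (I p) := by
    intro p
    have h1 : 0 < Fintype.card (ιI p) := Fintype.card_pos_iff.mpr ⟨0⟩
    rw [(hσI p).1] at h1
    exact Nat.pos_of_ne_zero fun h => by simp [h] at h1
  have hdO : ∀ p, (Fintype.card (O p) : ℂ) ≠ 0 := fun p => Nat.cast_ne_zero.mpr (hOcard p).ne'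
  have hdI : ∀ p, (Fintype.card (I p) : ℂ) ≠ 0 := fun p => Nat.cast_ne_zero.mpr (hIcard p).ne'
  -- the master trace formula
  have master : ∀ M : ∀ p, Matrix (I p × O p) (I p × O p) ℂ,
      (W * tensorFamily M).trace
        = ∑ t : ∀ p, ιI p × ιO p, (w t : ℂ) *
            ∏ p, ((σI p (t p).1 ⊗ₖ σO p (t p).2) * M p).trace := by
    intro M
    rw [hexp, expand, Matrix.sum_mul, Matrix.trace_sum]
    refine Finset.sum_congr rfl fun t _ => ?_
    rw [Matrix.smul_mul, Matrix.trace_smul, smul_eq_mul, trace_hsTerm_mul]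
  -- the identity multi-index
  set t₀ : ∀ p, ιI p × ιO p := fun p => (0, 0) with ht₀
  -- normalization of the identity coefficient
  have hw0 : (w t₀ : ℂ) * ∏ p, (Fintype.card (I p) : ℂ) = 1 := by
    have h1 : W.trace = ∑ t : ∀ p, ιI p × ιO p, (w t : ℂ) *
        ∏ p, ((σI p (t p).1).trace * (σO p (t p).2).trace) := by
      have hm := master (fun _ => 1)
      rw [tensorFamily_one, mul_one] at hm
      rw [hm]
      refine Finset.sum_congr rfl fun t _ => ?_
      congr 1
      exact Finset.prod_congr rfl fun p _ => by rw [mul_one, Matrix.trace_kronecker]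
    have h2 : W.trace = (w t₀ : ℂ) *
        (∏ p, (Fintype.card (I p) : ℂ)) * ∏ p, (Fintype.card (O p) : ℂ) := by
      rw [h1, Finset.sum_eq_single t₀]
      · rw [mul_assoc, ← Finset.prod_mul_distrib]
        congr 1
        refine Finset.prod_congr rfl fun p _ => ?_
        show ((σI p 0).trace * (σO p 0).trace) = _
        rw [hI0 p, hO0 p, Matrix.trace_one, Matrix.trace_one]
      · intro t _ hne
        obtain ⟨p, hp⟩ := Function.ne_iff.mp hne
        have hz : (σI p (t p).1).trace * (σO p (t p).2).trace = 0 := by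
          by_cases h : (t p).1 = 0
          · have h2 : (t p).2 ≠ 0 := by
              intro h2
              exact hp (Prod.ext h h2)
            rw [hOtr p _ h2, mul_zero]
          · rw [hItr p _ h, zero_mul]
        rw [Finset.prod_eq_zero (Finset.mem_univ p) hz, mul_zero]
      · intro h
        exact absurd (Finset.mem_univ t₀) h
    rw [htr] at h2
    have hprodO : (∏ p, (Fintype.card (O p) : ℂ)) ≠ 0 :=
      Finset.prod_ne_zero_iff.mpr fun p _ => hdO p
    apply mul_right_cancel₀ hprodO
    rw [one_mul]
    exact h2.symm
  constructor
  · -- normalization → OG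
    intro hnorm t hw hnt
    by_contra hno
    have h21 : ∀ p, (t p).2 = 0 → (t p).1 = 0 := by
      intro p h2
      by_contra h1
      exact hno ⟨p, h1, h2⟩
    obtain ⟨p₀, hp₀⟩ := hnt
    have hp₀2 : (t p₀).2 ≠ 0 := fun h => hp₀ ⟨h21 p₀ h, h⟩
    -- perturbation data
    set Hm : ∀ p, Matrix (I p × O p) (I p × O p) ℂ :=
      fun p => σI p (t p).1 ⊗ₖ σO p (t p).2 with hHm
    set Cb : P → ℝ := fun p => ∑ x, ∑ y, ‖Hm p x y‖ with hCb
    have hCnn : ∀ p, 0 ≤ Cb p := fun p => Finset.sum_nonneg fun _ _ =>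
      Finset.sum_nonneg fun _ _ => norm_nonneg _
    set δ : P → ℝ := fun p => (Cb p + 1)⁻¹ with hδ
    have hδpos : ∀ p, 0 < δ p := fun p => inv_pos.mpr (by linarith [hCnn p])
    set εv : P → Bool → ℝ :=
      fun p b => if (t p).2 = 0 then 0 else (if b then δ p else -δ p) with hεv
    have hεabs : ∀ p b, |εv p b| ≤ δ p := by
      intro p b
      simp only [hεv]
      by_cases h : (t p).2 = 0
      · rw [if_pos h, abs_zero]
        exact (hδpos p).le
      · rw [if_neg h]
        cases b
        · simp [abs_of_pos (hδpos p)]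
        · simp [abs_of_pos (hδpos p)]
    have hHmher : ∀ p, (Hm p).IsHermitian :=
      fun p => isHermitian_kronecker _ _ (hIher p _) (hOher p _)
    set Mc : (P → Bool) → ∀ p, Matrix (I p × O p) (I p × O p) ℂ :=
      fun η p => (((Fintype.card (O p) : ℝ)⁻¹ : ℝ) : ℂ) •
        ((1 : Matrix (I p × O p) (I p × O p) ℂ) + ((εv p (η p) : ℝ) : ℂ) • Hm p) with hMc
    have hcastO : ∀ p, (((Fintype.card (O p) : ℝ)) : ℂ) = (Fintype.card (O p) : ℂ) := by
      intro p; push_cast; ring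
    have hcO : ∀ p, (((Fintype.card (O p) : ℝ)⁻¹ : ℝ) : ℂ) ≠ 0 := by
      intro p
      rw [Complex.ofReal_ne_zero]
      exact inv_ne_zero (by exact_mod_cast hdO p)
    have hchoi : ∀ (η : P → Bool) (p : P), IsCPTPChoi (Mc η p) := by
      intro η p
      constructor
      · apply posSemidef_ofReal_smul _ (inv_nonneg.mpr (Nat.cast_nonneg _))
        refine posSemidef_one_add_smul (Hm p) (hHmher p) (εv p (η p)) ?_
        have h1 : |εv p (η p)| * Cb p ≤ δ p * Cb p :=
          mul_le_mul_of_nonneg_right (hεabs p (η p)) (hCnn p)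
        have h2 : δ p * Cb p ≤ 1 := by
          simp only [hδ]
          rw [inv_mul_eq_div]
          exact (div_le_one (by linarith [hCnn p])).mpr (by linarith [hCnn p])
        calc |εv p (η p)| * (∑ i, ∑ j, ‖Hm p i j‖) = |εv p (η p)| * Cb p := by
              rw [hCb]
          _ ≤ 1 := le_trans h1 h2
      · intro i j
        have hsum : ∀ o, (Mc η p) (i, o) (j, o)
            = (((Fintype.card (O p) : ℝ)⁻¹ : ℝ) : ℂ) *
              ((1 : Matrix (I p × O p) (I p × O p) ℂ) (i, o) (j, o)
                + (εv p (η p) : ℂ) * Hm p (i, o) (j, o)) := by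
          intro o
          simp only [hMc, Matrix.smul_apply, Matrix.add_apply, smul_eq_mul]
        rw [Finset.sum_congr rfl (fun o _ => hsum o), ← Finset.mul_sum,
          Finset.sum_add_distrib, sum_out_one, ← Finset.mul_sum]
        simp only [hHm]
        rw [sum_out_kronecker]
        have hfin : (((Fintype.card (O p) : ℝ)⁻¹ : ℝ) : ℂ) *
            ((Fintype.card (O p) : ℂ) * (1 : Matrix (I p) (I p) ℂ) i j)
              = (1 : Matrix (I p) (I p) ℂ) i j := by
          rw [Complex.ofReal_inv, hcastO p, ← mul_assoc, inv_mul_cancel₀ (hdO p), one_mul]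
        by_cases h2 : (t p).2 = 0
        · have he : εv p (η p) = 0 := by simp only [hεv]; rw [if_pos h2]
          rw [he, Complex.ofReal_zero, zero_mul, add_zero, hfin]
        · rw [hOtr p _ h2, mul_zero, mul_zero, add_zero, hfin]
    -- per-party trace factor
    have hfac : ∀ (η : P → Bool) (p : P) (s : ιI p × ιO p),
        ((σI p s.1 ⊗ₖ σO p s.2) * Mc η p).trace
          = (((Fintype.card (O p) : ℝ)⁻¹ : ℝ) : ℂ) *
            ((σI p s.1).trace * (σO p s.2).trace
              + (εv p (η p) : ℂ) *
                ((σI p s.1 * σI p (t p).1).trace * (σO p s.2 * σO p (t p).2).trace)) := by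
      intro η p s
      simp only [hMc]
      rw [Matrix.mul_smul, Matrix.trace_smul, smul_eq_mul]
      congr 1
      rw [Matrix.mul_add, Matrix.mul_one, Matrix.mul_smul, Matrix.trace_add, Matrix.trace_smul,
        smul_eq_mul, Matrix.trace_kronecker]
      congr 1
      simp only [hHm]
      rw [← Matrix.mul_kronecker_mul, Matrix.trace_kronecker]
    set sgn : P → Bool → ℂ := fun p b => if (t p).2 = 0 then 1 else (if b then 1 else -1)
      with hsgn
    set F : (p : P) → (ιI p × ιO p) → Bool → ℂ := fun p s b =>
      (((Fintype.card (O p) : ℝ)⁻¹ : ℝ) : ℂ) *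
        ((σI p s.1).trace * (σO p s.2).trace
          + (εv p b : ℂ) * ((σI p s.1 * σI p (t p).1).trace * (σO p s.2 * σO p (t p).2).trace))
      with hF
    have hS1 : (∑ η : P → Bool, (∏ p, sgn p (η p)) * (W * tensorFamily (Mc η)).trace) = 0 := by
      have hz : ∀ η : P → Bool, (W * tensorFamily (Mc η)).trace = 1 :=
        fun η => hnorm (Mc η) (hchoi η)
      simp only [hz, mul_one]
      have hpe : (∑ η : P → Bool, ∏ p, sgn p (η p)) = ∏ p, (∑ b, sgn p b) := by
        rw [Finset.prod_univ_sum, Fintype.piFinset_univ]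
      rw [hpe]
      apply Finset.prod_eq_zero (Finset.mem_univ p₀)
      rw [Fintype.sum_bool]
      simp only [hsgn]
      simp [hp₀2]
    have hS2 : (∑ η : P → Bool, (∏ p, sgn p (η p)) * (W * tensorFamily (Mc η)).trace)
        = ∑ s : ∀ p, ιI p × ιO p, (w s : ℂ) * ∏ p, (∑ b, sgn p b * F p (s p) b) := by
      have step1 : ∀ η : P → Bool, (∏ p, sgn p (η p)) * (W * tensorFamily (Mc η)).trace
          = ∑ s : ∀ p, ιI p × ιO p, (w s : ℂ) * ∏ p, (sgn p (η p) * F p (s p) (η p)) := by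
        intro η
        rw [master (Mc η), Finset.mul_sum]
        refine Finset.sum_congr rfl fun s _ => ?_
        rw [Finset.prod_mul_distrib]
        have hprod : ∏ p, ((σI p (s p).1 ⊗ₖ σO p (s p).2) * Mc η p).trace
            = ∏ p, F p (s p) (η p) :=
          Finset.prod_congr rfl fun p _ => by rw [hfac η p (s p)]
        rw [hprod]
        ring
      simp only [step1]
      rw [Finset.sum_comm]
      refine Finset.sum_congr rfl fun s _ => ?_
      rw [← Finset.mul_sum]
      congr 1
      rw [Finset.prod_univ_sum, Fintype.piFinset_univ]
    have hg0 : ∀ (p : P) (s : ιI p × ιO p), s ≠ t p → (∑ b, sgn p b * F p s b) = 0 := by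
      intro p s hs
      rw [Fintype.sum_bool]
      simp only [hsgn, hF, hεv]
      by_cases h2 : (t p).2 = 0
      · simp only [if_pos h2]
        have ht1 : (t p).1 = 0 := h21 p h2
        have hz : (σI p s.1).trace * (σO p s.2).trace = 0 := by
          by_cases ha : s.1 = 0
          · have hb : s.2 ≠ 0 := by
              intro hb
              exact hs (Prod.ext (ha.trans ht1.symm) (hb.trans h2.symm))
            rw [hOtr p _ hb, mul_zero]
          · rw [hItr p _ ha, zero_mul]
        rw [hz]
        push_cast
        ring
      · simp only [if_neg h2]
        have hz : (σI p s.1 * σI p (t p).1).trace * (σO p s.2 * σO p (t p).2).trace = 0 := by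
          by_cases ha : s.1 = (t p).1
          · have hb : s.2 ≠ (t p).2 := fun hb => hs (Prod.ext ha hb)
            rw [hOorth p _ _ hb, mul_zero]
          · rw [hIorth p _ _ ha, zero_mul]
        rw [hz]
        simp
    have hgt : ∀ p : P, (∑ b, sgn p b * F p (t p) b) ≠ 0 := by
      intro p
      rw [Fintype.sum_bool]
      simp only [hsgn, hF, hεv]
      by_cases h2 : (t p).2 = 0
      · simp only [if_pos h2]
        have ht1 : (t p).1 = 0 := h21 p h2
        rw [ht1, h2, hI0 p, hO0 p, Matrix.trace_one, Matrix.trace_one]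
        simp only [Complex.ofReal_zero, zero_mul, add_zero, one_mul]
        have heq : (((Fintype.card (O p) : ℝ)⁻¹ : ℝ) : ℂ) *
              ((Fintype.card (I p) : ℂ) * (Fintype.card (O p) : ℂ))
            + (((Fintype.card (O p) : ℝ)⁻¹ : ℝ) : ℂ) *
              ((Fintype.card (I p) : ℂ) * (Fintype.card (O p) : ℂ))
            = 2 * ((((Fintype.card (O p) : ℝ)⁻¹ : ℝ) : ℂ) *
              ((Fintype.card (I p) : ℂ) * (Fintype.card (O p) : ℂ))) := by ring
        rw [heq]
        exact mul_ne_zero two_ne_zero (mul_ne_zero (hcO p) (mul_ne_zero (hdI p) (hdO p)))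
      · simp only [if_neg h2]
        simp only [if_true, if_false, Bool.false_eq_true]
        have heq : (1 : ℂ) * ((((Fintype.card (O p) : ℝ)⁻¹ : ℝ) : ℂ) *
              ((σI p (t p).1).trace * (σO p (t p).2).trace
                + ((δ p : ℝ) : ℂ) *
                  ((σI p (t p).1 * σI p (t p).1).trace * (σO p (t p).2 * σO p (t p).2).trace)))
            + (-1 : ℂ) * ((((Fintype.card (O p) : ℝ)⁻¹ : ℝ) : ℂ) *
              ((σI p (t p).1).trace * (σO p (t p).2).trace
                + ((- δ p : ℝ) : ℂ) *
                  ((σI p (t p).1 * σI p (t p).1).trace * (σO p (t p).2 * σO p (t p).2).trace)))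
            = 2 * ((δ p : ℝ) : ℂ) * ((((Fintype.card (O p) : ℝ)⁻¹ : ℝ) : ℂ) *
              ((σI p (t p).1 * σI p (t p).1).trace * (σO p (t p).2 * σO p (t p).2).trace)) := by
          push_cast
          ring
        rw [heq]
        refine mul_ne_zero (mul_ne_zero two_ne_zero ?_) (mul_ne_zero (hcO p) (mul_ne_zero ?_ ?_))
        · rw [Complex.ofReal_ne_zero]
          exact (hδpos p).ne'
        · exact trace_mul_self_ne_zero _ (hIher p _) (hInz p _)
        · exact trace_mul_self_ne_zero _ (hOher p _) (hOnz p _)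
    have h3 : (∑ s : ∀ p, ιI p × ιO p, (w s : ℂ) * ∏ p, (∑ b, sgn p b * F p (s p) b))
        = (w t : ℂ) * ∏ p, (∑ b, sgn p b * F p (t p) b) := by
      rw [Finset.sum_eq_single t]
      · intro s _ hsne
        obtain ⟨p, hp⟩ := Function.ne_iff.mp hsne
        rw [Finset.prod_eq_zero (Finset.mem_univ p) (hg0 p (s p) hp), mul_zero]
      · intro h
        exact absurd (Finset.mem_univ t) h
    have hzero : (w t : ℂ) * ∏ p, (∑ b, sgn p b * F p (t p) b) = 0 := by
      rw [← h3, ← hS2]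
      exact hS1
    rcases mul_eq_zero.mp hzero with h | h
    · exact hw (by exact_mod_cast h)
    · exact absurd h (Finset.prod_ne_zero_iff.mpr fun p _ => hgt p)

  · -- OG → normalization
    intro hOG M hM
    rw [master M, Finset.sum_eq_single t₀]
    · have : ∀ p, ((σI p ((t₀ : ∀ p, ιI p × ιO p) p).1 ⊗ₖ σO p (t₀ p).2) * M p).trace
          = (Fintype.card (I p) : ℂ) := by
        intro p
        show ((σI p 0 ⊗ₖ σO p 0) * M p).trace = _
        rw [hI0 p, hO0 p, Matrix.one_kronecker_one, one_mul]
        exact trace_choi (M p) (hM p).2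
      rw [Finset.prod_congr rfl fun p _ => this p]
      exact hw0
    · intro t _ hne
      by_cases hwt : w t = 0
      · rw [hwt]
        norm_num
      · have hnt : NontrivialTerm t := by
          obtain ⟨p, hp⟩ := Function.ne_iff.mp hne
          refine ⟨p, fun hc => hp ?_⟩
          exact Prod.ext hc.1 hc.2
        obtain ⟨p, hp1, hp2⟩ := hOG t hwt hnt
        have hz : ((σI p (t p).1 ⊗ₖ σO p (t p).2) * M p).trace = 0 := by
          rw [hp2, hO0 p, trace_kron_one_mul _ _ (hM p).2]
          exact hItr p _ hp1
        rw [Finset.prod_eq_zero (Finset.mem_univ p) hz, mul_zero]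
    · intro h
      exact absurd (Finset.mem_univ t₀) h



end Statement0

end ProcessPaper
end

section
/- (Necessity direction of the product condition.) Let W and Z be processes on parties A', B', ... and A'', B'', ... respectively and suppose P = W ⊗ Z is not a valid process for the combined parties. Then P contains a nonzero nontrivial Hilbert–Schmidt term that is in type on no combined party; this term is the tensor product of a nonzero nontrivial term of W and a nonzero nontrivial term of Z, and this pair of terms satisfies: on every combined party where one term is trivial, the other is trivial or includes the out type; and on every combined party where one term is the in type, the other includes the out type. -/
open Matrix Kronecker BigOperators
open scoped ComplexOrder

namespace ProcessPaper

variable {P : Type*} [Fintype P] [DecidableEq P]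

variable {P : Type*} [Fintype P] [DecidableEq P]
  {I' O' I'' O'' : P → Type*}
  [∀ p, Fintype (I' p)] [∀ p, DecidableEq (I' p)]
  [∀ p, Fintype (O' p)] [∀ p, DecidableEq (O' p)]
  [∀ p, Fintype (I'' p)] [∀ p, DecidableEq (I'' p)]
  [∀ p, Fintype (O'' p)] [∀ p, DecidableEq (O'' p)]
  {ιI' ιO' ιI'' ιO'' : P → Type*}
  [∀ p, Fintype (ιI' p)] [∀ p, Zero (ιI' p)]
  [∀ p, Fintype (ιO' p)] [∀ p, Zero (ιO' p)]
  [∀ p, Fintype (ιI'' p)] [∀ p, Zero (ιI'' p)]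
  [∀ p, Fintype (ιO'' p)] [∀ p, Zero (ιO'' p)]

section Statement3

/-- The Kronecker product of positive semidefinite matrices is positive semidefinite. -/
private lemma posSemidef_kronecker {m n : Type*} [Fintype m] [DecidableEq m]
    [Fintype n] [DecidableEq n] {A : Matrix m m ℂ} {B : Matrix n n ℂ}
    (hA : A.PosSemidef) (hB : B.PosSemidef) : (A ⊗ₖ B).PosSemidef := by
  exact hA.kronecker hB

/-- The index equivalence between the combined-party index set and the product of
the primed and double-primed index sets. -/
private def idxEquiv : (∀ p, (I' p × I'' p) × (O' p × O'' p)) ≃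
    ((∀ p, I' p × O' p) × (∀ p, I'' p × O'' p)) where
  toFun x := (fun p => ((x p).1.1, (x p).2.1), fun p => ((x p).1.2, (x p).2.2))
  invFun y := fun p => (((y.1 p).1, (y.2 p).1), ((y.1 p).2, (y.2 p).2))
  left_inv x := rfl
  right_inv y := rfl

private lemma prodOp_eq_submatrix
    (W : Matrix ((p : P) → I' p × O' p) ((p : P) → I' p × O' p) ℂ)
    (Z : Matrix ((p : P) → I'' p × O'' p) ((p : P) → I'' p × O'' p) ℂ) :
    prodOp W Z = (W ⊗ₖ Z).submatrix (idxEquiv (I' := I')) (idxEquiv (I' := I')) :=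
  rfl

/-- The term equivalence. -/
private def termEquiv : ((∀ p, ιI' p × ιO' p) × (∀ p, ιI'' p × ιO'' p)) ≃
    (∀ p, (ιI' p × ιI'' p) × (ιO' p × ιO'' p)) where
  toFun ts := combineTerm ts.1 ts.2
  invFun u := (fun p => ((u p).1.1, (u p).2.1), fun p => ((u p).1.2, (u p).2.2))
  left_inv ts := rfl
  right_inv u := rfl

private lemma prodOp_trace
    (W : Matrix ((p : P) → I' p × O' p) ((p : P) → I' p × O' p) ℂ)
    (Z : Matrix ((p : P) → I'' p × O'' p) ((p : P) → I'' p × O'' p) ℂ) :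
    (prodOp W Z).trace = W.trace * Z.trace := by
  have h : (∑ x, prodOp W Z x x) =
      ∑ y : ((∀ p, I' p × O' p) × (∀ p, I'' p × O'' p)), W y.1 y.1 * Z y.2 y.2 :=
    Fintype.sum_equiv (idxEquiv (I' := I')) _ _ (fun x => rfl)
  simp only [Matrix.trace, Matrix.diag]
  rw [Finset.sum_mul_sum, h, Fintype.sum_prod_type]

private lemma expand_prod
    (σI' : ∀ p, ιI' p → Matrix (I' p) (I' p) ℂ)
    (σO' : ∀ p, ιO' p → Matrix (O' p) (O' p) ℂ)
    (σI'' : ∀ p, ιI'' p → Matrix (I'' p) (I'' p) ℂ)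
    (σO'' : ∀ p, ιO'' p → Matrix (O'' p) (O'' p) ℂ)
    (w : (∀ p, ιI' p × ιO' p) → ℝ) (z : (∀ p, ιI'' p × ιO'' p) → ℝ) :
    prodOp (expand σI' σO' w) (expand σI'' σO'' z) =
      expand (fun p => prodBasis (σI' p) (σI'' p))
        (fun p => prodBasis (σO' p) (σO'' p)) (prodCoeffs w z) := by
  funext x y
  have key : ∀ (t : ∀ p, ιI' p × ιO' p) (s : ∀ p, ιI'' p × ιO'' p),
      ((w t : ℂ) * hsTerm σI' σO' t (fun p => ((x p).1.1, (x p).2.1))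
          (fun p => ((y p).1.1, (y p).2.1))) *
        ((z s : ℂ) * hsTerm σI'' σO'' s (fun p => ((x p).1.2, (x p).2.2))
          (fun p => ((y p).1.2, (y p).2.2))) =
      ((prodCoeffs w z (combineTerm t s) : ℝ) : ℂ) *
        hsTerm (fun p => prodBasis (σI' p) (σI'' p))
          (fun p => prodBasis (σO' p) (σO'' p)) (combineTerm t s) x y := by
    intro t s
    have hc : prodCoeffs w z (combineTerm t s) = w t * z s := rfl
    have ht : hsTerm (fun p => prodBasis (σI' p) (σI'' p))
        (fun p => prodBasis (σO' p) (σO'' p)) (combineTerm t s) x y =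
        hsTerm σI' σO' t (fun p => ((x p).1.1, (x p).2.1))
          (fun p => ((y p).1.1, (y p).2.1)) *
        hsTerm σI'' σO'' s (fun p => ((x p).1.2, (x p).2.2))
          (fun p => ((y p).1.2, (y p).2.2)) := by
      simp only [hsTerm, prodBasis, combineTerm, Matrix.kroneckerMap_apply]
      rw [← Finset.prod_mul_distrib]
      exact Finset.prod_congr rfl fun p _ => by ring
    rw [hc, ht]
    push_cast
    ring
  calc prodOp (expand σI' σO' w) (expand σI'' σO'' z) x y
      = (∑ t, (w t : ℂ) * hsTerm σI' σO' t (fun p => ((x p).1.1, (x p).2.1))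
          (fun p => ((y p).1.1, (y p).2.1))) *
        (∑ s, (z s : ℂ) * hsTerm σI'' σO'' s (fun p => ((x p).1.2, (x p).2.2))
          (fun p => ((y p).1.2, (y p).2.2))) := by
        simp only [prodOp, expand, Matrix.sum_apply, Matrix.smul_apply, smul_eq_mul]
    _ = ∑ t, ∑ s, ((prodCoeffs w z (combineTerm t s) : ℝ) : ℂ) *
          hsTerm (fun p => prodBasis (σI' p) (σI'' p))
            (fun p => prodBasis (σO' p) (σO'' p)) (combineTerm t s) x y := by
        rw [Finset.sum_mul_sum]
        exact Finset.sum_congr rfl fun t _ => Finset.sum_congr rfl fun s _ => key t s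
    _ = ∑ ts : (∀ p, ιI' p × ιO' p) × (∀ p, ιI'' p × ιO'' p),
          ((prodCoeffs w z (combineTerm ts.1 ts.2) : ℝ) : ℂ) *
          hsTerm (fun p => prodBasis (σI' p) (σI'' p))
            (fun p => prodBasis (σO' p) (σO'' p)) (combineTerm ts.1 ts.2) x y := by
        rw [Fintype.sum_prod_type]
    _ = ∑ u, ((prodCoeffs w z u : ℝ) : ℂ) *
          hsTerm (fun p => prodBasis (σI' p) (σI'' p))
            (fun p => prodBasis (σO' p) (σO'' p)) u x y :=
        Equiv.sum_comp (termEquiv (ιI' := ιI') (ιO' := ιO') (ιI'' := ιI'') (ιO'' := ιO''))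
          (fun u => ((prodCoeffs w z u : ℝ) : ℂ) *
            hsTerm (fun p => prodBasis (σI' p) (σI'' p))
              (fun p => prodBasis (σO' p) (σO'' p)) u x y)
    _ = expand (fun p => prodBasis (σI' p) (σI'' p))
          (fun p => prodBasis (σO' p) (σO'' p)) (prodCoeffs w z) x y := by
        simp only [expand, Matrix.sum_apply, Matrix.smul_apply, smul_eq_mul]

private lemma prod_zero_iff {α β : Type*} [Zero α] [Zero β] {a : α} {b : β} :
    (a, b) = 0 ↔ a = 0 ∧ b = 0 := Prod.mk_eq_zero

/-- **Necessity direction of the product condition.** Let `W` and `Z` be processes on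
parties `A', B', …` and `A'', B'', …` respectively (with Hilbert–Schmidt coefficients
`w` and `z`) and suppose `P = W ⊗ Z` is not a valid process for the combined parties.
Then `P` contains a nonzero nontrivial Hilbert–Schmidt term that is in type on no
combined party; this term is the tensor product of a nonzero nontrivial term `t` of
`W` and a nonzero nontrivial term `s` of `Z`, and this pair of terms satisfies: on
every combined party where one term is trivial, the other is trivial or includes the
out type; and on every combined party where one term is the in type, the other
includes the out type. -/
theorem statement3
    (σI' : ∀ p, ιI' p → Matrix (I' p) (I' p) ℂ)
    (σO' : ∀ p, ιO' p → Matrix (O' p) (O' p) ℂ)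
    (σI'' : ∀ p, ιI'' p → Matrix (I'' p) (I'' p) ℂ)
    (σO'' : ∀ p, ιO'' p → Matrix (O'' p) (O'' p) ℂ)
    (hσI' : ∀ p, IsHSBasis (σI' p)) (hσO' : ∀ p, IsHSBasis (σO' p))
    (hσI'' : ∀ p, IsHSBasis (σI'' p)) (hσO'' : ∀ p, IsHSBasis (σO'' p))
    (W : Matrix ((p : P) → I' p × O' p) ((p : P) → I' p × O' p) ℂ)
    (Z : Matrix ((p : P) → I'' p × O'' p) ((p : P) → I'' p × O'' p) ℂ)
    (w : (∀ p, ιI' p × ιO' p) → ℝ) (z : (∀ p, ιI'' p × ιO'' p) → ℝ)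
    (hW : IsProcessWith σI' σO' W w) (hZ : IsProcessWith σI'' σO'' Z z)
    (hnot : ¬ IsProcess (fun p => prodBasis (σI' p) (σI'' p))
        (fun p => prodBasis (σO' p) (σO'' p)) (prodOp W Z)) :
    ∃ (t : ∀ p, ιI' p × ιO' p) (s : ∀ p, ιI'' p × ιO'' p),
      w t ≠ 0 ∧ z s ≠ 0 ∧ NontrivialTerm t ∧ NontrivialTerm s ∧
      prodCoeffs w z (combineTerm t s) ≠ 0 ∧
      NontrivialTerm (combineTerm t s) ∧
      (∀ p, ¬ InTypeAt (combineTerm t s) p) ∧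
      (∀ p, (TrivialAt t p → TrivialAt s p ∨ IncludesOutAt s p) ∧
            (TrivialAt s p → TrivialAt t p ∨ IncludesOutAt t p)) ∧
      (∀ p, (InTypeAt t p → IncludesOutAt s p) ∧
            (InTypeAt s p → IncludesOutAt t p)) := by
  classical
  obtain ⟨hWpsd, hWtr, hWexp, hWog⟩ := hW
  obtain ⟨hZpsd, hZtr, hZexp, hZog⟩ := hZ
  -- The product satisfies the first three conditions of being a process.
  have hpsd : (prodOp W Z).PosSemidef := by
    rw [prodOp_eq_submatrix]
    exact (posSemidef_kronecker hWpsd hZpsd).submatrix _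
  have htr : (prodOp W Z).trace = ∏ p, (Fintype.card (O' p × O'' p) : ℂ) := by
    rw [prodOp_trace, hWtr, hZtr, ← Finset.prod_mul_distrib]
    exact Finset.prod_congr rfl fun p _ => by
      rw [Fintype.card_prod]; push_cast; ring
  have hexp : prodOp W Z = expand (fun p => prodBasis (σI' p) (σI'' p))
      (fun p => prodBasis (σO' p) (σO'' p)) (prodCoeffs w z) := by
    rw [hWexp, hZexp]
    exact expand_prod σI' σO' σI'' σO'' w z
  -- Hence the OG condition must fail for the product coefficients.
  have hog : ¬ OGCoeffs (prodCoeffs w z) := fun hog =>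
    hnot ⟨prodCoeffs w z, hpsd, htr, hexp, hog⟩
  rw [OGCoeffs] at hog
  push_neg at hog
  obtain ⟨u, hu0, hunt, hno⟩ := hog
  set t : ∀ p, ιI' p × ιO' p := fun p => ((u p).1.1, (u p).2.1) with ht_def
  set s : ∀ p, ιI'' p × ιO'' p := fun p => ((u p).1.2, (u p).2.2) with hs_def
  have hcomb : combineTerm t s = u := rfl
  have hwz : prodCoeffs w z (combineTerm t s) ≠ 0 := hcomb ▸ hu0
  have hwzval : prodCoeffs w z (combineTerm t s) = w t * z s := rfl
  have hwt : w t ≠ 0 := left_ne_zero_of_mul (hwzval ▸ hwz)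
  have hzs : z s ≠ 0 := right_ne_zero_of_mul (hwzval ▸ hwz)
  have hupair : ∀ p, u p = (((t p).1, (s p).1), ((t p).2, (s p).2)) := fun p => rfl
  -- helper: unfolding triviality and types of `u` at `p`
  have htriv : ∀ p, TrivialAt u p ↔
      ((t p).1 = 0 ∧ (s p).1 = 0) ∧ ((t p).2 = 0 ∧ (s p).2 = 0) := by
    intro p
    rw [TrivialAt, hupair p]
    simp [Prod.ext_iff]
  have hin : ∀ p, InTypeAt u p ↔
      ¬((t p).1 = 0 ∧ (s p).1 = 0) ∧ ((t p).2 = 0 ∧ (s p).2 = 0) := by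
    intro p
    rw [InTypeAt, hupair p]
    simp [Prod.ext_iff, not_and_or]
  -- `t` is nontrivial
  have hTt : NontrivialTerm t := by
    by_contra ht
    rw [NontrivialTerm] at ht
    push_neg at ht
    -- then `s` is nontrivial
    have hTs : NontrivialTerm s := by
      obtain ⟨p, hp⟩ := hunt
      refine ⟨p, fun hsp => hp ?_⟩
      rw [htriv p]
      exact ⟨⟨(ht p).1, hsp.1⟩, ⟨(ht p).2, hsp.2⟩⟩
    obtain ⟨p, hp1, hp2⟩ := hZog s hzs hTs
    exact hno p ((hin p).mpr ⟨fun h => hp1 h.2, ⟨(ht p).2, hp2⟩⟩)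
  have hTs : NontrivialTerm s := by
    by_contra hs
    rw [NontrivialTerm] at hs
    push_neg at hs
    have hTt' : NontrivialTerm t := by
      obtain ⟨p, hp⟩ := hunt
      refine ⟨p, fun htp => hp ?_⟩
      rw [htriv p]
      exact ⟨⟨htp.1, (hs p).1⟩, ⟨htp.2, (hs p).2⟩⟩
    obtain ⟨p, hp1, hp2⟩ := hWog t hwt hTt'
    exact hno p ((hin p).mpr ⟨fun h => hp1 h.1, ⟨hp2, (hs p).2⟩⟩)
  refine ⟨t, s, hwt, hzs, hTt, hTs, hwz, hcomb ▸ hunt, hcomb ▸ hno, ?_, ?_⟩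
  · intro p
    constructor
    · intro htp
      by_cases hsp2 : (s p).2 = 0
      · left
        have hA : (t p).1 = 0 ∧ (s p).1 = 0 := by
          by_contra hA
          exact hno p ((hin p).mpr ⟨hA, ⟨htp.2, hsp2⟩⟩)
        exact ⟨hA.2, hsp2⟩
      · right; exact hsp2
    · intro hsp
      by_cases htp2 : (t p).2 = 0
      · left
        have hA : (t p).1 = 0 ∧ (s p).1 = 0 := by
          by_contra hA
          exact hno p ((hin p).mpr ⟨hA, ⟨htp2, hsp.2⟩⟩)
        exact ⟨hA.1, htp2⟩
      · right; exact htp2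
  · intro p
    constructor
    · intro htp
      by_contra hsp2
      rw [IncludesOutAt, not_not] at hsp2
      refine hno p ((hin p).mpr ⟨fun h => htp.1 h.1, ⟨htp.2, hsp2⟩⟩)
    · intro hsp
      by_contra htp2
      rw [IncludesOutAt, not_not] at htp2
      refine hno p ((hin p).mpr ⟨fun h => hsp.1 h.2, ⟨htp2, hsp.2⟩⟩)

end Statement3

end ProcessPaper
end
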